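/- Let U ⊆ ℝ × ℝ be open, u : ℝ × ℝ → ℝ, and let φ, ω : ℝ × ℝ → ℝ be twice continuously differentiable on U with ω nonvanishing on U, Δφ = u·φ and Δω = u·ω on U. Then the vector field ω²·∇(φ/ω) is divergence free on U: ∂x(ω²·(φ/ω)_x) + ∂y(ω²·(φ/ω)_y) = 0 on U. (This is the compatibility condition guaranteeing local solvability of the Moutard relations for θ.) -/

import Mathlib

/-- Partial derivative of `f` at `p` in direction `v`. -/
noncomputable def pd (v : ℝ × ℝ) (f : ℝ × ℝ → ℝ) (p : ℝ × ℝ) : ℝ :=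
  fderiv ℝ f p v

/-- Laplacian of `f` at `p`. -/
noncomputable def lap (f : ℝ × ℝ → ℝ) (p : ℝ × ℝ) : ℝ :=
  pd (1, 0) (pd (1, 0) f) p + pd (0, 1) (pd (0, 1) f) p

lemma pd_diffAt (v : ℝ × ℝ) {f : ℝ × ℝ → ℝ} {p : ℝ × ℝ}
    (hf : ContDiffAt ℝ 2 f p) : DifferentiableAt ℝ (pd v f) p := by
  have h1 : ContDiffAt ℝ 1 (fderiv ℝ f) p := hf.fderiv_right (by norm_num)
  have h2 : DifferentiableAt ℝ (fderiv ℝ f) p := h1.differentiableAt one_ne_zero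
  have h3 : DifferentiableAt ℝ
      (fun q => (ContinuousLinearMap.apply ℝ ℝ v) (fderiv ℝ f q)) p :=
    ((ContinuousLinearMap.apply ℝ ℝ v).differentiable.differentiableAt).comp p h2
  exact h3

lemma pd_mul (v : ℝ × ℝ) {a b : ℝ × ℝ → ℝ} {p : ℝ × ℝ}
    (ha : DifferentiableAt ℝ a p) (hb : DifferentiableAt ℝ b p) :
    pd v (fun q => a q * b q) p = a p * pd v b p + b p * pd v a p := by
  simp [pd, fderiv_fun_mul ha hb]

lemma pd_sub (v : ℝ × ℝ) {a b : ℝ × ℝ → ℝ} {p : ℝ × ℝ}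
    (ha : DifferentiableAt ℝ a p) (hb : DifferentiableAt ℝ b p) :
    pd v (fun q => a q - b q) p = pd v a p - pd v b p := by
  simp [pd, fderiv_fun_sub ha hb]

/-- if `Δφ = uφ` and `Δω = uω` with `ω` nonvanishing, then the vector
field `ω² ∇(φ/ω)` is divergence free. -/
theorem moutard_compatibility_divergence_free
    (U : Set (ℝ × ℝ)) (hU : IsOpen U)
    (u φ ω : ℝ × ℝ → ℝ)
    (hφ : ContDiffOn ℝ 2 φ U)
    (hω : ContDiffOn ℝ 2 ω U)
    (hω0 : ∀ p ∈ U, ω p ≠ 0)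
    (hφeq : ∀ p ∈ U, lap φ p = u p * φ p)
    (hωeq : ∀ p ∈ U, lap ω p = u p * ω p) :
    ∀ p ∈ U,
      pd (1, 0) (fun q => (ω q) ^ 2 * pd (1, 0) (fun r => φ r / ω r) q) p
        + pd (0, 1) (fun q => (ω q) ^ 2 * pd (0, 1) (fun r => φ r / ω r) q) p
        = 0 := by
  intro p hp
  -- differentiability facts at points of U
  have hφd : ∀ q ∈ U, DifferentiableAt ℝ φ q := fun q hq =>
    (hφ.contDiffAt (hU.mem_nhds hq)).differentiableAt two_ne_zero
  have hωd : ∀ q ∈ U, DifferentiableAt ℝ ω q := fun q hq =>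
    (hω.contDiffAt (hU.mem_nhds hq)).differentiableAt two_ne_zero
  set g : ℝ × ℝ → ℝ := fun r => φ r / ω r with hg
  have hgd : ∀ q ∈ U, DifferentiableAt ℝ g q := by
    intro q hq
    have : DifferentiableAt ℝ (fun r => φ r * (ω r)⁻¹) q :=
      (hφd q hq).mul ((hωd q hq).inv (hω0 q hq))
    simpa [hg, div_eq_mul_inv] using this
  -- key pointwise identity on U : ω² ∂g = ω ∂φ - φ ∂ω
  have key : ∀ v : ℝ × ℝ, ∀ q ∈ U,
      (ω q) ^ 2 * pd v g q = ω q * pd v φ q - φ q * pd v ω q := by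
    intro v q hq
    have heq : φ =ᶠ[nhds q] fun r => ω r * g r := by
      filter_upwards [hU.mem_nhds hq] with r hr
      simp [hg, mul_div_cancel₀ _ (hω0 r hr)]
    have hpdφ : pd v φ q = ω q * pd v g q + g q * pd v ω q := by
      have := heq.fderiv_eq (𝕜 := ℝ)
      calc pd v φ q = pd v (fun r => ω r * g r) q := by simp [pd, this]
        _ = ω q * pd v g q + g q * pd v ω q := pd_mul v (hωd q hq) (hgd q hq)
    have hgq : ω q * g q = φ q := by simp [hg, mul_div_cancel₀ _ (hω0 q hq)]
    have : ω q * pd v g q = pd v φ q - g q * pd v ω q := by linarith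
    calc (ω q) ^ 2 * pd v g q = ω q * (ω q * pd v g q) := by ring
      _ = ω q * (pd v φ q - g q * pd v ω q) := by rw [this]
      _ = ω q * pd v φ q - (ω q * g q) * pd v ω q := by ring
      _ = ω q * pd v φ q - φ q * pd v ω q := by rw [hgq]
  -- rewrite each outer derivative using the eventual equality
  have main : ∀ v : ℝ × ℝ,
      pd v (fun q => (ω q) ^ 2 * pd v g q) p
        = ω p * pd v (pd v φ) p - φ p * pd v (pd v ω) p := by
    intro v
    have heq : (fun q => (ω q) ^ 2 * pd v g q)
        =ᶠ[nhds p] fun q => ω q * pd v φ q - φ q * pd v ω q := by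
      filter_upwards [hU.mem_nhds hp] with q hq
      exact key v q hq
    have hpdφd : DifferentiableAt ℝ (pd v φ) p :=
      pd_diffAt v (hφ.contDiffAt (hU.mem_nhds hp))
    have hpdωd : DifferentiableAt ℝ (pd v ω) p :=
      pd_diffAt v (hω.contDiffAt (hU.mem_nhds hp))
    have h1 : DifferentiableAt ℝ (fun q => ω q * pd v φ q) p :=
      (hωd p hp).mul hpdφd
    have h2 : DifferentiableAt ℝ (fun q => φ q * pd v ω q) p :=
      (hφd p hp).mul hpdωd
    calc pd v (fun q => (ω q) ^ 2 * pd v g q) p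
        = pd v (fun q => ω q * pd v φ q - φ q * pd v ω q) p :=
          DFunLike.congr_fun (heq.fderiv_eq (𝕜 := ℝ)) v
      _ = pd v (fun q => ω q * pd v φ q) p - pd v (fun q => φ q * pd v ω q) p :=
          pd_sub v h1 h2
      _ = (ω p * pd v (pd v φ) p + pd v φ p * pd v ω p)
            - (φ p * pd v (pd v ω) p + pd v ω p * pd v φ p) := by
          rw [pd_mul v (hωd p hp) hpdφd, pd_mul v (hφd p hp) hpdωd]
      _ = ω p * pd v (pd v φ) p - φ p * pd v (pd v ω) p := by ring
  have h1 := main (1, 0)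
  have h2 := main (0, 1)
  have hlapφ := hφeq p hp
  have hlapω := hωeq p hp
  simp only [lap] at hlapφ hlapω
  rw [h1, h2]
  linear_combination ω p * hlapφ - φ p * hlapω
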